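/- For every real number r with 1 < r < 3, there exists a unique θ with 0 < θ < π/2 satisfying sin²θ = r·(1 − θ·cot θ). -/

import Mathlib

open Real Set Filter Topology

/-- The auxiliary function whose zeros in `(0, π/2)` correspond to solutions of
`sin²θ = r (1 − θ cot θ)` (obtained by multiplying through by `sin θ`). -/
noncomputable def gfun (r θ : ℝ) : ℝ := sin θ ^ 3 - r * sin θ + r * (θ * cos θ)

lemma gfun_hasDerivAt (r θ : ℝ) :
    HasDerivAt (gfun r) (sin θ * (3 * sin θ * cos θ - r * θ)) θ := by
  have h1 : HasDerivAt (fun x : ℝ => sin x ^ 3) (3 * sin θ ^ 2 * cos θ) θ := by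
    exact ((hasDerivAt_sin θ).fun_pow 3).congr_deriv (by norm_num)
  have h2 : HasDerivAt (fun x : ℝ => r * sin x) (r * cos θ) θ :=
    (hasDerivAt_sin θ).const_mul r
  have h3 : HasDerivAt (fun x : ℝ => r * (x * cos x))
      (r * (1 * cos θ + θ * (-sin θ))) θ :=
    ((hasDerivAt_id θ).mul (hasDerivAt_cos θ)).const_mul r
  have := (h1.sub h2).add h3
  refine this.congr_deriv ?_
  ring

lemma gfun_continuous (r : ℝ) : Continuous (gfun r) := by unfold gfun; fun_prop

lemma sin_sub_mul_cos_pos {u : ℝ} (h1 : 0 < u) (h2 : u < π) :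
    0 < sin u - u * cos u := by
  rcases lt_or_ge u (π / 2) with h | h
  · have hc : 0 < cos u := cos_pos_of_mem_Ioo ⟨by linarith [pi_pos], h⟩
    have ht : u < tan u := lt_tan h1 h
    rw [tan_eq_sin_div_cos, lt_div_iff₀ hc] at ht
    linarith
  · have hc : cos u ≤ 0 := cos_nonpos_of_pi_div_two_le_of_le h (by linarith)
    have hs : 0 < sin u := sin_pos_of_pos_of_lt_pi h1 h2
    nlinarith

lemma pfun_pos {u : ℝ} (h1 : 0 < u) (h2 : u ≤ π) :
    0 < 2 - 2 * cos u - u * sin u := by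
  have hder : ∀ x : ℝ, HasDerivAt (fun y : ℝ => 2 - 2 * cos y - y * sin y)
      (sin x - x * cos x) x := by
    intro x
    have h1 : HasDerivAt (fun y : ℝ => 2 - 2 * cos y) (2 * sin x) x := by
      simpa using ((hasDerivAt_cos x).const_mul (2:ℝ)).const_sub 2
    have h2 : HasDerivAt (fun y : ℝ => y * sin y) (1 * sin x + x * cos x) x :=
      (hasDerivAt_id x).mul (hasDerivAt_sin x)
    refine (h1.sub h2).congr_deriv ?_; ring
  have hmono : StrictMonoOn (fun y : ℝ => 2 - 2 * cos y - y * sin y) (Icc 0 π) := by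
    apply strictMonoOn_of_deriv_pos (convex_Icc _ _)
    · fun_prop
    · intro x hx
      rw [interior_Icc] at hx
      rw [(hder x).deriv]
      exact sin_sub_mul_cos_pos hx.1 hx.2
  have := hmono (left_mem_Icc.mpr pi_pos.le) ⟨h1.le, h2⟩ h1
  simpa using this

/-- The key inequality `3 sin u < u (2 + cos u)` for `0 < u < π`. -/
lemma key_ineq {u : ℝ} (h1 : 0 < u) (h2 : u < π) :
    3 * sin u < u * (2 + cos u) := by
  have hder : ∀ x : ℝ, HasDerivAt (fun y : ℝ => y * (2 + cos y) - 3 * sin y)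
      (2 - 2 * cos x - x * sin x) x := by
    intro x
    have h1 : HasDerivAt (fun y : ℝ => y * (2 + cos y))
        (1 * (2 + cos x) + x * (-sin x)) x :=
      (hasDerivAt_id x).mul ((hasDerivAt_cos x).const_add 2)
    have h2 : HasDerivAt (fun y : ℝ => 3 * sin y) (3 * cos x) x :=
      (hasDerivAt_sin x).const_mul 3
    refine (h1.sub h2).congr_deriv ?_; ring
  have hmono : StrictMonoOn (fun y : ℝ => y * (2 + cos y) - 3 * sin y) (Icc 0 π) := by
    apply strictMonoOn_of_deriv_pos (convex_Icc _ _)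
    · fun_prop
    · intro x hx
      rw [interior_Icc] at hx
      rw [(hder x).deriv]
      exact pfun_pos hx.1 hx.2.le
  have := hmono (left_mem_Icc.mpr pi_pos.le) ⟨h1.le, h2.le⟩ h1
  simp only [Real.cos_zero, Real.sin_zero] at this
  linarith [this]

/-- At any root of `gfun r` in `(0, π/2)` the derivative is negative. -/
lemma deriv_neg_at_root {r θ : ℝ} (h1 : 0 < θ) (h2 : θ < π / 2)
    (hroot : gfun r θ = 0) : sin θ * (3 * sin θ * cos θ - r * θ) < 0 := by
  have hs : 0 < sin θ := sin_pos_of_pos_of_lt_pi h1 (by linarith [pi_pos])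
  have hc : 0 < cos θ := cos_pos_of_mem_Ioo ⟨by linarith [pi_pos], h2⟩
  have hD : 0 < sin θ - θ * cos θ := by
    have ht : θ < tan θ := lt_tan h1 h2
    rw [tan_eq_sin_div_cos, lt_div_iff₀ hc] at ht
    linarith
  have hk : 3 * sin (2 * θ) < 2 * θ * (2 + cos (2 * θ)) :=
    key_ineq (by linarith) (by linarith)
  rw [sin_two_mul, cos_two_mul] at hk
  have hsq : sin θ ^ 2 + cos θ ^ 2 = 1 := sin_sq_add_cos_sq θ
  have hg : sin θ ^ 3 = r * (sin θ - θ * cos θ) := by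
    unfold gfun at hroot; ring_nf at hroot ⊢; linarith
  have hkey : 3 * sin θ * cos θ < θ * (1 + 2 * cos θ ^ 2) := by nlinarith
  have hid : (r * θ - 3 * sin θ * cos θ) * (sin θ - θ * cos θ)
      = sin θ * (θ * (1 + 2 * cos θ ^ 2) - 3 * sin θ * cos θ) := by
    linear_combination (-θ) * hg + (θ * sin θ) * hsq
  have hpos : 0 < (r * θ - 3 * sin θ * cos θ) * (sin θ - θ * cos θ) := by
    rw [hid]; exact mul_pos hs (sub_pos.mpr hkey)
  nlinarith [hpos, hD, hs]

/-- Existence of a root of `gfun r` in `(0, π/2)` when `1 < r < 3`. -/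
lemma exists_root {r : ℝ} (hr₁ : 1 < r) (hr₂ : r < 3) :
    ∃ c, 0 < c ∧ c < π / 2 ∧ gfun r c = 0 := by
  set a : ℝ := min (Real.sqrt ((3 - r) / 3)) (1 / 2) with ha
  have ha0 : 0 < a := lt_min (Real.sqrt_pos.mpr (by linarith)) (by norm_num)
  have ha2 : a ≤ 1 / 2 := min_le_right _ _
  have haπ : a < π / 2 := by nlinarith [pi_gt_three]
  have hmono : StrictMonoOn (gfun r) (Icc 0 a) := by
    apply strictMonoOn_of_deriv_pos (convex_Icc _ _) (gfun_continuous r).continuousOn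
    intro x hx
    rw [interior_Icc] at hx
    rw [(gfun_hasDerivAt r x).deriv]
    have hx1 : 0 < x := hx.1
    have hx2 : x ≤ 1 / 2 := le_of_lt (lt_of_lt_of_le hx.2 ha2)
    have hs : 0 < sin x := sin_pos_of_pos_of_lt_pi hx1 (by nlinarith [pi_gt_three])
    have hsin2 : 2 * x - (2 * x) ^ 3 / 4 < sin (2 * x) :=
      by nlinarith [sin_gt_sub_cube (x := 2 * x) (by linarith), pow_pos (by linarith : (0:ℝ) < 2 * x) 3]
    have hxsq : x ^ 2 < (3 - r) / 3 := by
      have := lt_of_lt_of_le hx.2 (min_le_left _ _ : a ≤ Real.sqrt ((3 - r) / 3))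
      exact (Real.lt_sqrt hx1.le).mp this
    have h2 : 3 * sin x * cos x - r * x > 0 := by
      have h3 : 2 * sin x * cos x = sin (2 * x) := (sin_two_mul x).symm
      nlinarith
    exact mul_pos hs h2
  have hga : 0 < gfun r a := by
    have := hmono (left_mem_Icc.mpr ha0.le) (right_mem_Icc.mpr ha0.le) ha0
    simpa [gfun] using this
  have hgπ : gfun r (π / 2) < 0 := by
    simp [gfun]; linarith
  have : (0 : ℝ) ∈ Ioo (gfun r (π / 2)) (gfun r a) := ⟨hgπ, hga⟩
  obtain ⟨c, hc, hc0⟩ := intermediate_value_Ioo' haπ.le (gfun_continuous r).continuousOn this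
  exact ⟨c, lt_trans ha0 hc.1, hc.2, hc0⟩

/-- Uniqueness: `gfun r` cannot have two distinct roots in `(0, π/2)`. -/
lemma no_two_roots {r θ₁ θ₂ : ℝ} (h₁ : 0 < θ₁) (h₂ : θ₂ < π / 2) (hlt : θ₁ < θ₂)
    (hg1 : gfun r θ₁ = 0) (hg2 : gfun r θ₂ = 0) : False := by
  -- near θ₁ on the right, gfun r is negative
  have hd1 : sin θ₁ * (3 * sin θ₁ * cos θ₁ - r * θ₁) < 0 :=
    deriv_neg_at_root h₁ (lt_trans hlt h₂) hg1
  have hslope1 : Tendsto (slope (gfun r) θ₁) (𝓝[>] θ₁)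
      (𝓝 (sin θ₁ * (3 * sin θ₁ * cos θ₁ - r * θ₁))) :=
    (hasDerivAt_iff_tendsto_slope.mp (gfun_hasDerivAt r θ₁)).mono_left
      (nhdsWithin_mono _ (fun x hx => ne_of_gt hx))
  have hev1 : ∀ᶠ x in 𝓝[>] θ₁, slope (gfun r) θ₁ x < 0 :=
    hslope1.eventually_lt_const hd1
  have hev2 : ∀ᶠ x in 𝓝[>] θ₁, x ∈ Ioo θ₁ θ₂ :=
    eventually_mem_set.mpr (Ioo_mem_nhdsGT_of_mem ⟨le_refl θ₁, hlt⟩)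
  obtain ⟨t, hts, htm⟩ := (hev1.and hev2).exists
  have hgt : gfun r t < 0 := by
    rw [slope_def_field, hg1, sub_zero] at hts
    have h := mul_neg_of_neg_of_pos hts (sub_pos.mpr htm.1)
    rwa [div_mul_cancel₀ _ (sub_pos.mpr htm.1).ne'] at h
  -- the infimum of roots to the right of t
  set S : Set ℝ := Icc t θ₂ ∩ gfun r ⁻¹' {0} with hS
  have hScpt : IsCompact S :=
    isCompact_Icc.inter_right (isClosed_singleton.preimage (gfun_continuous r))
  have hSne : S.Nonempty := ⟨θ₂, ⟨htm.2.le, le_refl _⟩, hg2⟩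
  set c : ℝ := sInf S with hcdef
  have hcS : c ∈ S := hScpt.sInf_mem hSne
  have hgc : gfun r c = 0 := hcS.2
  have htc : t < c := lt_of_le_of_ne hcS.1.1
    (by intro h; rw [← h] at hgc; exact absurd hgc hgt.ne)
  have hcθ₂ : c ≤ θ₂ := hcS.1.2
  -- gfun r is negative on [t, c)
  have hneg : ∀ x ∈ Ico t c, gfun r x < 0 := by
    intro x hx
    by_contra hge
    push_neg at hge
    rcases eq_or_lt_of_le hge with heq | hpos
    · have hxS : x ∈ S := ⟨⟨hx.1, le_trans hx.2.le hcθ₂⟩, heq.symm⟩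
      exact absurd (csInf_le hScpt.bddBelow hxS) (not_le.mpr hx.2)
    · have htx : t < x := by
        rcases eq_or_lt_of_le hx.1 with rfl | h
        · exact absurd hpos (not_lt.mpr hgt.le)
        · exact h
      have h0 : (0 : ℝ) ∈ Ioo (gfun r t) (gfun r x) := ⟨hgt, hpos⟩
      obtain ⟨y, hy, hy0⟩ :=
        intermediate_value_Ioo htx.le (gfun_continuous r).continuousOn h0
      have hyS : y ∈ S := ⟨⟨hy.1.le, le_trans (le_trans hy.2.le hx.2.le) hcθ₂⟩, hy0⟩
      exact absurd (csInf_le hScpt.bddBelow hyS)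
        (not_le.mpr (lt_trans hy.2 hx.2))
  -- hence the derivative at c is nonnegative (limit of left slopes)
  have hslopec : Tendsto (slope (gfun r) c) (𝓝[<] c)
      (𝓝 (sin c * (3 * sin c * cos c - r * c))) :=
    (hasDerivAt_iff_tendsto_slope.mp (gfun_hasDerivAt r c)).mono_left
      (nhdsWithin_mono _ (fun x hx => ne_of_lt hx))
  have hevc : ∀ᶠ x in 𝓝[<] c, (0:ℝ) ≤ slope (gfun r) c x := by
    filter_upwards [eventually_mem_set.mpr (Ioo_mem_nhdsLT_of_mem ⟨htc, le_refl c⟩)]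
      with x hx
    have hgx : gfun r x < 0 := hneg x ⟨hx.1.le, hx.2⟩
    rw [slope_def_field, hgc, sub_zero]
    exact le_of_lt (div_pos_of_neg_of_neg hgx (sub_neg.mpr hx.2))
  have hge0 : (0:ℝ) ≤ sin c * (3 * sin c * cos c - r * c) := ge_of_tendsto hslopec hevc
  have hlt0 : sin c * (3 * sin c * cos c - r * c) < 0 :=
    deriv_neg_at_root (lt_trans h₁ (lt_trans htm.1 htc)) (lt_of_le_of_lt hcθ₂ h₂) hgc
  linarith

/-- The original equation is equivalent to `gfun r θ = 0` on `(0, π/2)`. -/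
lemma eq_iff_gfun {r θ : ℝ} (h1 : 0 < θ) (h2 : θ < π / 2) :
    sin θ ^ 2 = r * (1 - θ * Real.cot θ) ↔ gfun r θ = 0 := by
  have hs : sin θ ≠ 0 :=
    (sin_pos_of_pos_of_lt_pi h1 (by linarith [pi_pos])).ne'
  rw [Real.cot_eq_cos_div_sin]
  unfold gfun
  constructor
  · intro h
    field_simp at h
    nlinarith [h]
  · intro h
    field_simp
    nlinarith [h]

/-- For every real `r` with `1 < r < 3`, there is a unique `θ` with
`0 < θ < π/2` satisfying `sin²θ = r (1 − θ cot θ)`. -/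
theorem stmt_14 (r : ℝ) (hr₁ : 1 < r) (hr₂ : r < 3) :
    ∃! θ : ℝ, (0 < θ ∧ θ < Real.pi / 2) ∧
      Real.sin θ ^ 2 = r * (1 - θ * Real.cot θ) := by
  obtain ⟨c, hc0, hcπ, hgc⟩ := exists_root hr₁ hr₂
  refine ⟨c, ⟨⟨hc0, hcπ⟩, (eq_iff_gfun hc0 hcπ).mpr hgc⟩, ?_⟩
  rintro y ⟨⟨hy0, hyπ⟩, hy⟩
  have hgy := (eq_iff_gfun hy0 hyπ).mp hy
  rcases lt_trichotomy y c with h | h | h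
  · exact (no_two_roots hy0 hcπ h hgy hgc).elim
  · exact h
  · exact (no_two_roots hc0 hyπ h hgc hgy).elim
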